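/- Let F be a finite field of cardinality m and let d ≥ 1 be an integer. Then the affine symplectic group ASp(2d,F) (the group of permutations of F^{2d} of the form v ↦ A·v + t with A ∈ Sp(2d,F) and t ∈ F^{2d}) has no proper normal subgroup whose index divides m^{2d} − 1; i.e., every normal subgroup of ASp(2d,F) whose index divides m^{2d} − 1 equals the whole group. -/

import Mathlib

open Matrix

namespace ASpAux

variable {d : ℕ} {F : Type*} [Field F]

/-- The standard symplectic form. -/
def om (x y : (Fin d ⊕ Fin d) → F) : F :=
  ∑ i : Fin d, (x (Sum.inr i) * y (Sum.inl i) - x (Sum.inl i) * y (Sum.inr i))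

lemma om_add_left (x x' y : (Fin d ⊕ Fin d) → F) : om (x + x') y = om x y + om x' y := by
  simp only [om, Pi.add_apply, ← Finset.sum_add_distrib]
  exact Finset.sum_congr rfl fun i _ => by ring

lemma om_smul_left (c : F) (x y : (Fin d ⊕ Fin d) → F) : om (c • x) y = c * om x y := by
  simp only [om, Pi.smul_apply, smul_eq_mul, Finset.mul_sum]
  exact Finset.sum_congr rfl fun i _ => by ring

lemma om_self (x : (Fin d ⊕ Fin d) → F) : om x x = 0 := by simp [om, mul_comm]

lemma om_skew (x y : (Fin d ⊕ Fin d) → F) : om x y = - om y x := by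
  simp only [om, ← Finset.sum_neg_distrib]
  exact Finset.sum_congr rfl fun i _ => by ring

lemma om_add_right (x y y' : (Fin d ⊕ Fin d) → F) : om x (y + y') = om x y + om x y' := by
  simp only [om, Pi.add_apply, ← Finset.sum_add_distrib]
  exact Finset.sum_congr rfl fun i _ => by ring

lemma om_sub_right (x y y' : (Fin d ⊕ Fin d) → F) : om x (y - y') = om x y - om x y' := by
  simp only [om, Pi.sub_apply, ← Finset.sum_sub_distrib]
  exact Finset.sum_congr rfl fun i _ => by ring

/-- `e i`, the first half of the standard basis. -/
def ee (i : Fin d) : (Fin d ⊕ Fin d) → F := Pi.single (Sum.inl i) 1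

/-- `f i`, the second half of the standard basis. -/
def ff (i : Fin d) : (Fin d ⊕ Fin d) → F := Pi.single (Sum.inr i) 1

lemma om_ee_left (j : Fin d) (y : (Fin d ⊕ Fin d) → F) : om (ee j) y = - y (Sum.inr j) := by
  simp [om, ee, Pi.single_apply]

lemma om_ff_left (j : Fin d) (y : (Fin d ⊕ Fin d) → F) : om (ff j) y = y (Sum.inl j) := by
  simp [om, ff, Pi.single_apply]

lemma om_ee_right (j : Fin d) (x : (Fin d ⊕ Fin d) → F) : om x (ee j) = x (Sum.inr j) := by
  simp [om, ee, Pi.single_apply]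

lemma om_ff_right (j : Fin d) (x : (Fin d ⊕ Fin d) → F) : om x (ff j) = - x (Sum.inl j) := by
  simp [om, ff, Pi.single_apply]

lemma J_mulVec (y : (Fin d ⊕ Fin d) → F) :
    (Matrix.J (Fin d) F) *ᵥ y = Sum.elim (fun i => - y (Sum.inr i)) (fun i => y (Sum.inl i)) := by
  have : y = Sum.elim (y ∘ Sum.inl) (y ∘ Sum.inr) := (Sum.elim_comp_inl_inr y).symm
  rw [Matrix.J, this, Matrix.fromBlocks_mulVec]
  simp [Matrix.neg_mulVec]
  rfl

lemma om_eq_dot (x y : (Fin d ⊕ Fin d) → F) : om x y = x ⬝ᵥ ((Matrix.J (Fin d) F) *ᵥ y) := by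
  rw [J_mulVec, dotProduct, Fintype.sum_sum_type, om, ← Finset.sum_add_distrib]
  exact Finset.sum_congr rfl fun i _ => by simp; ring

lemma matrix_ext_dot {M N : Matrix (Fin d ⊕ Fin d) (Fin d ⊕ Fin d) F}
    (h : ∀ x y, x ⬝ᵥ (M *ᵥ y) = x ⬝ᵥ (N *ᵥ y)) : M = N := by
  ext i j
  have := h (Pi.single i 1) (Pi.single j 1)
  simpa using this

lemma matrix_ext_mulVec {M N : Matrix (Fin d ⊕ Fin d) (Fin d ⊕ Fin d) F}
    (h : ∀ x, M *ᵥ x = N *ᵥ x) : M = N := by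
  ext i j
  have := congrFun (h (Pi.single j 1)) i
  simpa using this

lemma dot_mulVec_assoc (A : Matrix (Fin d ⊕ Fin d) (Fin d ⊕ Fin d) F)
    (x z : (Fin d ⊕ Fin d) → F) : x ⬝ᵥ (Aᵀ *ᵥ z) = (A *ᵥ x) ⬝ᵥ z := by
  rw [Matrix.dotProduct_mulVec, Matrix.vecMul_transpose]

lemma om_mulVec_eq (A : Matrix (Fin d ⊕ Fin d) (Fin d ⊕ Fin d) F)
    (x y : (Fin d ⊕ Fin d) → F) :
    om (A *ᵥ x) (A *ᵥ y) = x ⬝ᵥ ((Aᵀ * Matrix.J (Fin d) F * A) *ᵥ y) := by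
  rw [om_eq_dot, ← Matrix.mulVec_mulVec, ← Matrix.mulVec_mulVec, dot_mulVec_assoc]

lemma om_invariant_iff (A : Matrix (Fin d ⊕ Fin d) (Fin d ⊕ Fin d) F) :
    Aᵀ * Matrix.J (Fin d) F * A = Matrix.J (Fin d) F ↔
      ∀ x y, om (A *ᵥ x) (A *ᵥ y) = om x y := by
  constructor
  · intro h x y
    rw [om_mulVec_eq, h, om_eq_dot]
  · intro h
    apply matrix_ext_dot
    intro x y
    rw [← om_mulVec_eq, h, om_eq_dot]

lemma om_invariant_of_mem (A : Matrix.symplecticGroup (Fin d) F)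
    (x y : (Fin d ⊕ Fin d) → F) :
    om ((A : Matrix (Fin d ⊕ Fin d) (Fin d ⊕ Fin d) F) *ᵥ x)
       ((A : Matrix (Fin d ⊕ Fin d) (Fin d ⊕ Fin d) F) *ᵥ y) = om x y :=
  (om_invariant_iff _).1 (SymplecticGroup.mem_iff'.1 A.2) x y

/-- the vector `J *ᵥ v`. -/
def jv (v : (Fin d ⊕ Fin d) → F) : (Fin d ⊕ Fin d) → F :=
  Sum.elim (fun i => - v (Sum.inr i)) (fun i => v (Sum.inl i))

lemma jv_dot (v x : (Fin d ⊕ Fin d) → F) : jv v ⬝ᵥ x = om x v := by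
  rw [dotProduct, Fintype.sum_sum_type, om, ← Finset.sum_add_distrib]
  exact Finset.sum_congr rfl fun i _ => by simp [jv]; ring

/-- symplectic transvection matrix `x ↦ x + c·ω(x,v)·v`. -/
def tmat (v : (Fin d ⊕ Fin d) → F) (c : F) : Matrix (Fin d ⊕ Fin d) (Fin d ⊕ Fin d) F :=
  1 + c • Matrix.vecMulVec v (jv v)

lemma tmat_mulVec (v : (Fin d ⊕ Fin d) → F) (c : F) (x : (Fin d ⊕ Fin d) → F) :
    tmat v c *ᵥ x = x + (c * om x v) • v := by
  funext k
  simp only [tmat, Matrix.add_mulVec, Matrix.one_mulVec, Matrix.smul_mulVec,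
    Pi.add_apply, Pi.smul_apply, smul_eq_mul]
  have : (Matrix.vecMulVec v (jv v) *ᵥ x) k = v k * (jv v ⬝ᵥ x) := by
    simp only [Matrix.mulVec, Matrix.vecMulVec_apply, dotProduct, Finset.mul_sum, mul_assoc]
  rw [this, jv_dot]
  ring

lemma om_tmat (v : (Fin d ⊕ Fin d) → F) (c : F) (x y : (Fin d ⊕ Fin d) → F) :
    om (tmat v c *ᵥ x) (tmat v c *ᵥ y) = om x y := by
  rw [tmat_mulVec, tmat_mulVec]
  rw [om_add_left, om_smul_left]
  rw [show om x (y + (c * om y v) • v) = om x y + (c * om y v) * om x v by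
    rw [om_skew, om_add_left, om_smul_left, om_skew x y]; ring_nf
    rw [om_skew v x]; ring]
  rw [show om v (y + (c * om y v) • v) = om v y by
    rw [om_skew, om_add_left, om_smul_left, om_self, om_skew y v]; ring]
  rw [om_skew v y]
  ring

lemma tmat_mul (v : (Fin d ⊕ Fin d) → F) (c c' : F) :
    tmat v c * tmat v c' = tmat v (c + c') := by
  apply matrix_ext_mulVec
  intro x
  rw [← Matrix.mulVec_mulVec, tmat_mulVec, tmat_mulVec, tmat_mulVec]
  have : om (x + (c' * om x v) • v) v = om x v := by
    rw [om_add_left, om_smul_left, om_self]; ring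
  rw [this, add_assoc, ← add_smul]
  ring_nf

lemma tmat_zero (v : (Fin d ⊕ Fin d) → F) : tmat v 0 = 1 := by
  simp [tmat]

lemma tmat_pow (v : (Fin d ⊕ Fin d) → F) (c : F) (n : ℕ) :
    tmat v c ^ n = tmat v (n * c) := by
  induction n with
  | zero => simp [tmat_zero]
  | succ n ih =>
    rw [pow_succ, ih, tmat_mul]
    push_cast
    ring_nf

lemma tmat_mem (v : (Fin d ⊕ Fin d) → F) (c : F) :
    tmat v c ∈ Matrix.symplecticGroup (Fin d) F :=
  SymplecticGroup.mem_iff'.2 ((om_invariant_iff _).2 (om_tmat v c))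

/-- transvection as an element of the symplectic group. -/
def tvElt (v : (Fin d ⊕ Fin d) → F) (c : F) : Matrix.symplecticGroup (Fin d) F :=
  ⟨tmat v c, tmat_mem v c⟩

/-- The set of transvections in the symplectic group. -/
def tvSet (d : ℕ) (F : Type*) [Field F] : Set (Matrix.symplecticGroup (Fin d) F) :=
  {g | ∃ v c, (g : Matrix (Fin d ⊕ Fin d) (Fin d ⊕ Fin d) F) = tmat v c}

/-- Stabilizer of a vector, as a subgroup of `Sp`. -/
def stab (z : (Fin d ⊕ Fin d) → F) : Subgroup (Matrix.symplecticGroup (Fin d) F) where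
  carrier := {g | (g : Matrix (Fin d ⊕ Fin d) (Fin d ⊕ Fin d) F) *ᵥ z = z}
  one_mem' := by simp
  mul_mem' := by
    rintro a b ha hb
    show ((a * b : Matrix.symplecticGroup (Fin d) F) :
      Matrix (Fin d ⊕ Fin d) (Fin d ⊕ Fin d) F) *ᵥ z = z
    rw [Submonoid.coe_mul, ← Matrix.mulVec_mulVec]
    rw [hb, ha]
  inv_mem' := by
    rintro a ha
    show ((a⁻¹ : Matrix.symplecticGroup (Fin d) F) :
      Matrix (Fin d ⊕ Fin d) (Fin d ⊕ Fin d) F) *ᵥ z = z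
    conv_lhs => rw [← ha]
    rw [Matrix.mulVec_mulVec, ← Submonoid.coe_mul, inv_mul_cancel, OneMemClass.coe_one,
      Matrix.one_mulVec]

/-- Subgroup generated by transvections whose direction satisfies `P`. -/
def tvP (P : ((Fin d ⊕ Fin d) → F) → Prop) : Subgroup (Matrix.symplecticGroup (Fin d) F) :=
  Subgroup.closure {g | ∃ v c, P v ∧
    (g : Matrix (Fin d ⊕ Fin d) (Fin d ⊕ Fin d) F) = tmat v c}

lemma tvP_le_closure_tvSet (P : ((Fin d ⊕ Fin d) → F) → Prop) :
    tvP P ≤ Subgroup.closure (tvSet d F) := by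
  apply Subgroup.closure_mono
  rintro g ⟨v, c, _, hg⟩
  exact ⟨v, c, hg⟩

lemma tvP_fix {P : ((Fin d ⊕ Fin d) → F) → Prop} {z : (Fin d ⊕ Fin d) → F}
    (hz : ∀ v, P v → om z v = 0) {g : Matrix.symplecticGroup (Fin d) F} (hg : g ∈ tvP P) :
    (g : Matrix (Fin d ⊕ Fin d) (Fin d ⊕ Fin d) F) *ᵥ z = z := by
  revert hg
  have : tvP P ≤ stab z := by
    apply Subgroup.closure_le _ |>.2
    rintro g ⟨v, c, hP, hg⟩
    show (g : Matrix (Fin d ⊕ Fin d) (Fin d ⊕ Fin d) F) *ᵥ z = z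
    rw [hg, tmat_mulVec, hz v hP, mul_zero, zero_smul, add_zero]
  exact fun hg => this hg


/-- Vectors supported (symplectically) on the coordinates in `S`. -/
def InU (S : Finset (Fin d)) (v : (Fin d ⊕ Fin d) → F) : Prop :=
  ∀ j, j ∉ S → v (Sum.inl j) = 0 ∧ v (Sum.inr j) = 0

lemma InU_add {S : Finset (Fin d)} {v w : (Fin d ⊕ Fin d) → F} (hv : InU S v) (hw : InU S w) :
    InU S (v + w) := by
  intro j hj
  simp [(hv j hj).1, (hv j hj).2, (hw j hj).1, (hw j hj).2]

lemma InU_sub {S : Finset (Fin d)} {v w : (Fin d ⊕ Fin d) → F} (hv : InU S v) (hw : InU S w) :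
    InU S (v - w) := by
  intro j hj
  simp [(hv j hj).1, (hv j hj).2, (hw j hj).1, (hw j hj).2]

lemma InU_ee {S : Finset (Fin d)} {i : Fin d} (hi : i ∈ S) : InU S (ee (F := F) i) := by
  intro j hj
  have : j ≠ i := fun h => hj (h ▸ hi)
  constructor <;> simp [ee, Pi.single_apply, Sum.inl.injEq, this]

lemma InU_ff {S : Finset (Fin d)} {i : Fin d} (hi : i ∈ S) : InU S (ff (F := F) i) := by
  intro j hj
  have : j ≠ i := fun h => hj (h ▸ hi)
  constructor <;> simp [ff, Pi.single_apply, Sum.inr.injEq, this]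

lemma ee_ne_zero (i : Fin d) : (ee (F := F) i) ≠ 0 := by
  intro h
  have := congrFun h (Sum.inl i)
  simp [ee, Pi.single_eq_same] at this

/-- nondegeneracy of `om` on `U`. -/
lemma InU_nondeg {S : Finset (Fin d)} {z : (Fin d ⊕ Fin d) → F} (hz : InU S z) (h0 : z ≠ 0) :
    ∃ w, InU S w ∧ om z w ≠ 0 := by
  obtain ⟨k, hk⟩ := Function.ne_iff.1 h0
  simp only [Pi.zero_apply] at hk
  cases k with
  | inl j =>
    have hjS : j ∈ S := by
      by_contra hj
      exact hk (hz j hj).1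
    exact ⟨ff j, InU_ff hjS, by rw [om_ff_right]; simpa using hk⟩
  | inr j =>
    have hjS : j ∈ S := by
      by_contra hj
      exact hk (hz j hj).2
    exact ⟨ee j, InU_ee hjS, by rw [om_ee_right]; exact hk⟩

/-- One transvection moving `x` to `y` when `om x y ≠ 0`. -/
lemma moveOne {P : ((Fin d ⊕ Fin d) → F) → Prop} {x y : (Fin d ⊕ Fin d) → F}
    (hP : P (y - x)) (hxy : om x y ≠ 0) :
    ∃ g ∈ tvP P, (g : Matrix (Fin d ⊕ Fin d) (Fin d ⊕ Fin d) F) *ᵥ x = y := by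
  have hv : om x (y - x) = om x y := by rw [om_sub_right, om_self, sub_zero]
  refine ⟨tvElt (y - x) (om x (y - x))⁻¹, ?_, ?_⟩
  · exact Subgroup.subset_closure ⟨y - x, (om x (y - x))⁻¹, hP, rfl⟩
  · show tmat (y - x) (om x (y - x))⁻¹ *ᵥ x = y
    rw [tmat_mulVec, inv_mul_cancel₀ (by rw [hv]; exact hxy), one_smul]
    abel

lemma coe_mul_mulVec (a b : Matrix.symplecticGroup (Fin d) F) (x : (Fin d ⊕ Fin d) → F) :
    ((a * b : Matrix.symplecticGroup (Fin d) F) :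
      Matrix (Fin d ⊕ Fin d) (Fin d ⊕ Fin d) F) *ᵥ x
      = (a : Matrix (Fin d ⊕ Fin d) (Fin d ⊕ Fin d) F) *ᵥ
        ((b : Matrix (Fin d ⊕ Fin d) (Fin d ⊕ Fin d) F) *ᵥ x) := by
  rw [Submonoid.coe_mul, ← Matrix.mulVec_mulVec]

/-- Transvections with directions in `U` move any nonzero `x ∈ U` to any nonzero `y ∈ U`. -/
lemma moveA {S : Finset (Fin d)} {x y : (Fin d ⊕ Fin d) → F}
    (hx : InU S x) (hy : InU S y) (hx0 : x ≠ 0) (hy0 : y ≠ 0) :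
    ∃ g ∈ tvP (InU (F := F) S), (g : Matrix (Fin d ⊕ Fin d) (Fin d ⊕ Fin d) F) *ᵥ x = y := by
  by_cases hxy : om x y = 0
  · obtain ⟨a, ha, hxa⟩ := InU_nondeg hx hx0
    obtain ⟨b, hb, hyb⟩ := InU_nondeg hy hy0
    obtain ⟨z, hz, hxz, hyz⟩ : ∃ z, InU S z ∧ om x z ≠ 0 ∧ om y z ≠ 0 := by
      by_cases h1 : om y a = 0
      · by_cases h2 : om x b = 0
        · refine ⟨a + b, InU_add ha hb, ?_, ?_⟩
          · rw [om_add_right, h2, add_zero]; exact hxa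
          · rw [om_add_right, h1, zero_add]; exact hyb
        · exact ⟨b, hb, h2, hyb⟩
      · exact ⟨a, ha, hxa, h1⟩
    obtain ⟨g1, hg1m, hg1⟩ := moveOne (InU_sub hz hx) hxz
    have hzy : om z y ≠ 0 := by rw [om_skew]; exact neg_ne_zero.2 hyz
    obtain ⟨g2, hg2m, hg2⟩ := moveOne (InU_sub hy hz) hzy
    refine ⟨g2 * g1, mul_mem hg2m hg1m, ?_⟩
    rw [coe_mul_mulVec, hg1, hg2]
  · obtain ⟨g, hgm, hg⟩ := moveOne (InU_sub hy hx) hxy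
    exact ⟨g, hgm, hg⟩

lemma om_ee_ff (i : Fin d) : om (ee (F := F) i) (ff i) = -1 := by
  rw [om_ee_left]
  simp [ff, Pi.single_eq_same]

/-- Transvections fixing `e i` moving `x` to `f i`. -/
lemma moveB {S : Finset (Fin d)} {i : Fin d} (hi : i ∈ S) {x : (Fin d ⊕ Fin d) → F}
    (hx : InU S x) (he : om (ee i) x = om (ee i) (ff i)) :
    ∃ g ∈ tvP (fun v => InU S v ∧ om (ee (F := F) i) v = 0),
      (g : Matrix (Fin d ⊕ Fin d) (Fin d ⊕ Fin d) F) *ᵥ x = ff i := by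
  have hEF : om (ee (F := F) i) (ff i) = -1 := om_ee_ff i
  have hxe : om x (ee i) = 1 := by
    rw [om_skew, he, hEF]; norm_num
  by_cases hxf : om x (ff i) = 0
  · -- go through z = e i + f i
    set z : (Fin d ⊕ Fin d) → F := ee i + ff i with hzdef
    have hz : InU S z := InU_add (InU_ee hi) (InU_ff hi)
    have hxz : om x z ≠ 0 := by
      rw [hzdef, om_add_right, hxf, add_zero, hxe]
      exact one_ne_zero
    have hQ1 : om (ee (F := F) i) (z - x) = 0 := by
      rw [om_sub_right, hzdef, om_add_right, om_self, zero_add, he]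
      ring
    obtain ⟨g1, hg1m, hg1⟩ := moveOne (P := fun v => InU S v ∧ om (ee (F := F) i) v = 0)
      ⟨InU_sub hz hx, hQ1⟩ hxz
    have hzf : om z (ff i) ≠ 0 := by
      rw [hzdef, om_add_left, om_self, add_zero, hEF]
      norm_num
    have hQ2 : om (ee (F := F) i) (ff i - z) = 0 := by
      rw [om_sub_right, hzdef, om_add_right, om_self, zero_add]
      ring
    obtain ⟨g2, hg2m, hg2⟩ := moveOne (P := fun v => InU S v ∧ om (ee (F := F) i) v = 0)
      ⟨InU_sub (InU_ff hi) hz, hQ2⟩ hzf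
    refine ⟨g2 * g1, mul_mem hg2m hg1m, ?_⟩
    rw [coe_mul_mulVec, hg1, hg2]
  · have hQ : om (ee (F := F) i) (ff i - x) = 0 := by
      rw [om_sub_right, he]; ring
    obtain ⟨g, hgm, hg⟩ := moveOne (P := fun v => InU S v ∧ om (ee (F := F) i) v = 0)
      ⟨InU_sub (InU_ff hi) hx, hQ⟩ hxf
    exact ⟨g, hgm, hg⟩


lemma tvP_fix_ee {S : Finset (Fin d)} {j : Fin d} (hj : j ∉ S)
    {g : Matrix.symplecticGroup (Fin d) F} (hg : g ∈ tvP (InU (F := F) S)) :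
    (g : Matrix (Fin d ⊕ Fin d) (Fin d ⊕ Fin d) F) *ᵥ ee j = ee j :=
  tvP_fix (fun v hv => by rw [om_ee_left, (hv j hj).2, neg_zero]) hg

lemma tvP_fix_ff {S : Finset (Fin d)} {j : Fin d} (hj : j ∉ S)
    {g : Matrix.symplecticGroup (Fin d) F} (hg : g ∈ tvP (InU (F := F) S)) :
    (g : Matrix (Fin d ⊕ Fin d) (Fin d ⊕ Fin d) F) *ᵥ ff j = ff j :=
  tvP_fix (fun v hv => by rw [om_ff_left]; exact (hv j hj).1) hg

theorem mem_closure_tvSet_of_fix (S : Finset (Fin d)) :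
    ∀ A : Matrix.symplecticGroup (Fin d) F,
      (∀ j, j ∉ S → ((A : Matrix (Fin d ⊕ Fin d) (Fin d ⊕ Fin d) F) *ᵥ ee j = ee j ∧
        (A : Matrix (Fin d ⊕ Fin d) (Fin d ⊕ Fin d) F) *ᵥ ff j = ff j)) →
      A ∈ Subgroup.closure (tvSet d F) := by
  induction S using Finset.strongInduction with
  | _ S IH =>
    intro A hfix
    rcases S.eq_empty_or_nonempty with rfl | ⟨i, hi⟩
    · -- A fixes every basis vector, hence A = 1
      have hA1 : (A : Matrix (Fin d ⊕ Fin d) (Fin d ⊕ Fin d) F) = 1 := by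
        ext k l
        have hl : (A : Matrix (Fin d ⊕ Fin d) (Fin d ⊕ Fin d) F) *ᵥ Pi.single l 1
            = Pi.single l 1 := by
          cases l with
          | inl j => exact (hfix j (by simp)).1
          | inr j => exact (hfix j (by simp)).2
        have hk := congrFun hl k
        rw [Matrix.mulVec_single] at hk
        simp only [Pi.smul_apply, Matrix.col_apply, op_smul_eq_mul, mul_one] at hk
        rw [hk, Matrix.one_apply, Pi.single_apply]
      have : A = 1 := Subtype.ext (by rw [hA1]; rfl)
      rw [this]
      exact one_mem _
    · -- inductive step
      set u := (A : Matrix (Fin d ⊕ Fin d) (Fin d ⊕ Fin d) F) *ᵥ ee i with hu_def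
      have hu : InU S u := by
        intro j hj
        constructor
        · have h1 : u (Sum.inl j) = om (ff j) u := (om_ff_left j u).symm
          rw [h1, hu_def, ← (hfix j hj).2, om_invariant_of_mem, om_ff_left]
          have : j ≠ i := fun h => hj (h ▸ hi)
          simp [ee, Pi.single_apply, this]
        · have h1 : u (Sum.inr j) = - om (ee j) u := by rw [om_ee_left]; ring
          rw [h1, hu_def, ← (hfix j hj).1, om_invariant_of_mem, om_ee_left]
          simp [ee, Pi.single_apply]
      have hu0 : u ≠ 0 := by
        intro h
        have key : ((A⁻¹ : Matrix.symplecticGroup (Fin d) F) :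
            Matrix (Fin d ⊕ Fin d) (Fin d ⊕ Fin d) F) *ᵥ u = ee i := by
          rw [hu_def, Matrix.mulVec_mulVec, ← Submonoid.coe_mul, inv_mul_cancel,
            OneMemClass.coe_one, Matrix.one_mulVec]
        rw [h, Matrix.mulVec_zero] at key
        exact ee_ne_zero i key.symm
      obtain ⟨T₁, hT₁m, hT₁⟩ := moveA hu (InU_ee hi) hu0 (ee_ne_zero i)
      set A₁ := T₁ * A with hA₁def
      have hA₁fix : ∀ j, j ∉ S →
          ((A₁ : Matrix (Fin d ⊕ Fin d) (Fin d ⊕ Fin d) F) *ᵥ ee j = ee j ∧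
           (A₁ : Matrix (Fin d ⊕ Fin d) (Fin d ⊕ Fin d) F) *ᵥ ff j = ff j) := by
        intro j hj
        constructor
        · rw [hA₁def, coe_mul_mulVec, (hfix j hj).1, tvP_fix_ee hj hT₁m]
        · rw [hA₁def, coe_mul_mulVec, (hfix j hj).2, tvP_fix_ff hj hT₁m]
      have hA₁e : (A₁ : Matrix (Fin d ⊕ Fin d) (Fin d ⊕ Fin d) F) *ᵥ ee i = ee i := by
        rw [hA₁def, coe_mul_mulVec, ← hu_def, hT₁]
      set x' := (A₁ : Matrix (Fin d ⊕ Fin d) (Fin d ⊕ Fin d) F) *ᵥ ff i with hx'def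
      have hx' : InU S x' := by
        intro j hj
        constructor
        · have h1 : x' (Sum.inl j) = om (ff j) x' := (om_ff_left j x').symm
          rw [h1, hx'def, ← (hA₁fix j hj).2, om_invariant_of_mem, om_ff_left]
          simp [ff, Pi.single_apply]
        · have h1 : x' (Sum.inr j) = - om (ee j) x' := by rw [om_ee_left]; ring
          rw [h1, hx'def, ← (hA₁fix j hj).1, om_invariant_of_mem, om_ee_left]
          have : j ≠ i := fun h => hj (h ▸ hi)
          simp [ff, Pi.single_apply, this]
      have he' : om (ee i) x' = om (ee i) (ff i) := by
        have h2 := om_invariant_of_mem A₁ (ee i) (ff i)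
        rw [hA₁e] at h2
        exact h2
      obtain ⟨T₂, hT₂m, hT₂⟩ := moveB hi hx' he'
      set A₂ := T₂ * A₁ with hA₂def
      have hT₂InU : T₂ ∈ tvP (InU (F := F) S) := by
        revert hT₂m
        apply Subgroup.closure_mono
        rintro g ⟨v, c, ⟨hv, _⟩, hg⟩
        exact ⟨v, c, hv, hg⟩
      have hA₂fix : ∀ j, j ∉ S.erase i →
          ((A₂ : Matrix (Fin d ⊕ Fin d) (Fin d ⊕ Fin d) F) *ᵥ ee j = ee j ∧
           (A₂ : Matrix (Fin d ⊕ Fin d) (Fin d ⊕ Fin d) F) *ᵥ ff j = ff j) := by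
        intro j hj
        by_cases hjS : j ∈ S
        · have hji : j = i := by
            by_contra hji
            exact hj (Finset.mem_erase.2 ⟨hji, hjS⟩)
          subst hji
          constructor
          · rw [hA₂def, coe_mul_mulVec, hA₁e]
            exact tvP_fix (fun v hv => hv.2) hT₂m
          · rw [hA₂def, coe_mul_mulVec, ← hx'def, hT₂]
        · constructor
          · rw [hA₂def, coe_mul_mulVec, (hA₁fix j hjS).1, tvP_fix_ee hjS hT₂InU]
          · rw [hA₂def, coe_mul_mulVec, (hA₁fix j hjS).2, tvP_fix_ff hjS hT₂InU]
      have hA₂mem : A₂ ∈ Subgroup.closure (tvSet d F) :=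
        IH (S.erase i) (Finset.erase_ssubset hi) A₂ hA₂fix
      have hAeq : A = (T₂ * T₁)⁻¹ * A₂ := by
        rw [hA₂def, hA₁def]
        group
      rw [hAeq]
      exact mul_mem (inv_mem (mul_mem (tvP_le_closure_tvSet _ hT₂m)
        (tvP_le_closure_tvSet _ hT₁m))) hA₂mem

theorem closure_tvSet_eq_top : Subgroup.closure (tvSet d F) = ⊤ := by
  rw [eq_top_iff]
  intro A _
  exact mem_closure_tvSet_of_fix Finset.univ A (fun j hj => absurd (Finset.mem_univ j) hj)

end ASpAux





/-- The affine symplectic group `ASp(2d,F)`: the subgroup of the permutation group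
of `F^{2d}` consisting of all maps `v ↦ A ⬝ v + t` with `A ∈ Sp(2d,F)` and
`t ∈ F^{2d}`. -/
def affineSymplecticGroup (d : ℕ) (F : Type*) [Field F] [Fintype F] :
    Subgroup (Equiv.Perm ((Fin d ⊕ Fin d) → F)) where
  carrier := {σ | ∃ A : Matrix.symplecticGroup (Fin d) F, ∃ t : (Fin d ⊕ Fin d) → F,
    ∀ v, σ v = (A : Matrix (Fin d ⊕ Fin d) (Fin d ⊕ Fin d) F) *ᵥ v + t}
  one_mem' := ⟨1, 0, fun v => by simp⟩
  mul_mem' := by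
    rintro σ τ ⟨A, t, hA⟩ ⟨B, s, hB⟩
    refine ⟨A * B, (A : Matrix (Fin d ⊕ Fin d) (Fin d ⊕ Fin d) F) *ᵥ s + t, fun v => ?_⟩
    simp [Equiv.Perm.mul_apply, hA, hB, Matrix.mulVec_add, Matrix.mulVec_mulVec,
      add_assoc]
  inv_mem' := by
    rintro σ ⟨A, t, hA⟩
    have key : ∀ x : (Fin d ⊕ Fin d) → F,
        (A : Matrix (Fin d ⊕ Fin d) (Fin d ⊕ Fin d) F) *ᵥ
          ((↑(A⁻¹) : Matrix (Fin d ⊕ Fin d) (Fin d ⊕ Fin d) F) *ᵥ x) = x := by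
      intro x
      rw [Matrix.mulVec_mulVec, ← Submonoid.coe_mul, mul_inv_cancel,
        OneMemClass.coe_one, Matrix.one_mulVec]
    refine ⟨A⁻¹, -((↑(A⁻¹) : Matrix (Fin d ⊕ Fin d) (Fin d ⊕ Fin d) F) *ᵥ t),
      fun v => ?_⟩
    apply σ.injective
    rw [← Equiv.Perm.mul_apply, mul_inv_cancel, Equiv.Perm.one_apply, hA, Matrix.mulVec_add, key, Matrix.mulVec_neg, key]
    abel


namespace ASpAux

variable {d : ℕ} {F : Type*} [Field F] [Fintype F]

/-- translation as an element of the affine symplectic group. -/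
def trElt (t : (Fin d ⊕ Fin d) → F) : ↥(affineSymplecticGroup d F) :=
  ⟨Equiv.addRight t, ⟨1, t, fun v => by simp⟩⟩

lemma trElt_zero : trElt (d := d) (F := F) 0 = 1 := by
  apply Subtype.ext
  apply Equiv.ext
  intro v
  simp [trElt]

lemma trElt_pow (t : (Fin d ⊕ Fin d) → F) (n : ℕ) : trElt t ^ n = trElt (n • t) := by
  induction n with
  | zero => simp [trElt_zero]
  | succ n ih =>
    rw [pow_succ, ih]
    apply Subtype.ext
    rw [Subgroup.coe_mul]
    apply Equiv.ext
    intro v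
    rw [Equiv.Perm.mul_apply]
    show ((Equiv.addRight (n • t)) ((Equiv.addRight t) v)) = (Equiv.addRight ((n + 1) • t)) v
    rw [Equiv.coe_addRight, Equiv.coe_addRight, Equiv.coe_addRight, succ_nsmul]
    beta_reduce
    abel

/-- the permutation of `F^{2d}` induced by a symplectic matrix. -/
def spPerm (A : Matrix.symplecticGroup (Fin d) F) :
    Equiv.Perm ((Fin d ⊕ Fin d) → F) where
  toFun v := (A : Matrix (Fin d ⊕ Fin d) (Fin d ⊕ Fin d) F) *ᵥ v
  invFun v := ((A⁻¹ : Matrix.symplecticGroup (Fin d) F) :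
    Matrix (Fin d ⊕ Fin d) (Fin d ⊕ Fin d) F) *ᵥ v
  left_inv v := by
    show ((A⁻¹ : Matrix.symplecticGroup (Fin d) F) :
      Matrix (Fin d ⊕ Fin d) (Fin d ⊕ Fin d) F) *ᵥ
      ((A : Matrix (Fin d ⊕ Fin d) (Fin d ⊕ Fin d) F) *ᵥ v) = v
    rw [Matrix.mulVec_mulVec, ← Submonoid.coe_mul, inv_mul_cancel, OneMemClass.coe_one,
      Matrix.one_mulVec]
  right_inv v := by
    show ((A : Matrix.symplecticGroup (Fin d) F) :
      Matrix (Fin d ⊕ Fin d) (Fin d ⊕ Fin d) F) *ᵥ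
      (((A⁻¹ : Matrix.symplecticGroup (Fin d) F) :
        Matrix (Fin d ⊕ Fin d) (Fin d ⊕ Fin d) F) *ᵥ v) = v
    rw [Matrix.mulVec_mulVec, ← Submonoid.coe_mul, mul_inv_cancel, OneMemClass.coe_one,
      Matrix.one_mulVec]

/-- the group homomorphism from `Sp(2d,F)` to `ASp(2d,F)`. -/
def spHom : Matrix.symplecticGroup (Fin d) F →* ↥(affineSymplecticGroup d F) :=
  MonoidHom.mk' (fun A => ⟨spPerm A, ⟨A, 0, fun v => by simp [spPerm]⟩⟩)
    (by
      intro a b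
      apply Subtype.ext
      apply Equiv.ext
      intro v
      show ((a * b : Matrix.symplecticGroup (Fin d) F) :
        Matrix (Fin d ⊕ Fin d) (Fin d ⊕ Fin d) F) *ᵥ v = _
      rw [Submonoid.coe_mul, ← Matrix.mulVec_mulVec]
      rfl)

lemma tvElt_pow_char (p : ℕ) [CharP F p] (v : (Fin d ⊕ Fin d) → F) (c : F) :
    tvElt v c ^ p = 1 := by
  apply Subtype.ext
  rw [SubmonoidClass.coe_pow]
  show tmat v c ^ p = ((1 : Matrix.symplecticGroup (Fin d) F) :
    Matrix (Fin d ⊕ Fin d) (Fin d ⊕ Fin d) F)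
  rw [tmat_pow, CharP.cast_eq_zero F p, zero_mul, tmat_zero, OneMemClass.coe_one]

/-- main quotient lemma : an element whose `p`-th power is `1` lies in any normal
subgroup of index prime to `p`. -/
lemma mem_of_pow_prime {G : Type*} [Group G] [Finite G] (H : Subgroup G) [H.Normal]
    {p : ℕ} (hp : p.Prime) (hcop : ¬ p ∣ H.index) {g : G} (hg : g ^ p = 1) : g ∈ H := by
  have h1 : (QuotientGroup.mk' H g) ^ p = 1 := by
    rw [← map_pow, hg, _root_.map_one]
  have h2 : (QuotientGroup.mk' H g) ^ H.index = 1 := by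
    rw [Subgroup.index_eq_card]
    exact pow_card_eq_one'
  have hd1 : orderOf (QuotientGroup.mk' H g) ∣ p := orderOf_dvd_of_pow_eq_one h1
  have hd2 : orderOf (QuotientGroup.mk' H g) ∣ H.index := orderOf_dvd_of_pow_eq_one h2
  have hco : Nat.Coprime p H.index := (Nat.Prime.coprime_iff_not_dvd hp).2 hcop
  have : orderOf (QuotientGroup.mk' H g) ∣ 1 := by
    have := Nat.dvd_gcd hd1 hd2
    rwa [Nat.Coprime.gcd_eq_one hco] at this
  have : QuotientGroup.mk' H g = 1 := orderOf_eq_one_iff.1 (Nat.dvd_one.1 this)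
  rwa [← QuotientGroup.ker_mk' H, MonoidHom.mem_ker]

end ASpAux

/-- `ASp(2d,F)` (for a finite field `F` with `m` elements and `d ≥ 1`) has no proper
normal subgroup whose index divides `m^{2d} - 1`: every such normal subgroup is the
whole group. -/
theorem affineSymplecticGroup_no_proper_normal_subgroup_of_index_dvd
    (F : Type*) [Field F] [Fintype F] (m : ℕ) (hm : Fintype.card F = m)
    (d : ℕ) (hd : 1 ≤ d) (H : Subgroup (affineSymplecticGroup d F)) (hH : H.Normal)
    (hdvd : H.index ∣ m ^ (2 * d) - 1) : H = ⊤ := by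
  classical
  open ASpAux in
  set p := ringChar F with hp_def
  have hp : p.Prime := CharP.char_is_prime F p
  obtain ⟨n, -, hcard⟩ := FiniteField.card F p
  have hpm : p ∣ m := by
    rw [← hm, hcard]
    exact dvd_pow_self p (by exact_mod_cast n.ne_zero)
  have hm2 : 1 ≤ m ^ (2 * d) := by
    have : 0 < m := by
      rw [← hm]
      exact Fintype.card_pos
    exact Nat.one_le_pow _ _ this
  have hnot : ¬ p ∣ H.index := by
    intro hdvd'
    have h1 : p ∣ m ^ (2 * d) - 1 := hdvd'.trans hdvd
    have h2 : p ∣ m ^ (2 * d) := hpm.trans (dvd_pow_self m (by omega))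
    have h3 : p ∣ 1 := by
      have := Nat.dvd_sub h2 h1
      rwa [Nat.sub_sub_self hm2] at this
    exact hp.one_lt.ne' (Nat.dvd_one.1 h3)
  rw [eq_top_iff]
  rintro g -
  obtain ⟨A, t, hg⟩ := g.2
  have hdec : g = trElt t * spHom A := by
    apply Subtype.ext
    rw [Subgroup.coe_mul]
    apply Equiv.ext
    intro v
    rw [Equiv.Perm.mul_apply]
    show (g : Equiv.Perm ((Fin d ⊕ Fin d) → F)) v = (Equiv.addRight t) ((spPerm A) v)
    rw [hg v]
    rfl
  rw [hdec]
  have htr : trElt t ∈ H := by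
    apply mem_of_pow_prime H hp hnot
    rw [trElt_pow]
    have : p • t = 0 := by
      funext v
      show p • t v = 0
      rw [nsmul_eq_mul, CharP.cast_eq_zero F p, zero_mul]
    rw [this, trElt_zero]
  have hsp : spHom A ∈ H := by
    have hA : A ∈ Subgroup.closure (tvSet d F) := by
      rw [closure_tvSet_eq_top]
      trivial
    have hle : Subgroup.closure (tvSet d F) ≤ H.comap (spHom (d := d) (F := F)) := by
      apply (Subgroup.closure_le _).2
      rintro g' ⟨v, c, hg'⟩
      have : g' = tvElt v c := Subtype.ext hg'
      subst this
      show spHom (tvElt v c) ∈ H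
      apply mem_of_pow_prime H hp hnot
      rw [← map_pow, tvElt_pow_char p, _root_.map_one]
    exact hle hA
  exact mul_mem htr hsp
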